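/- Let k be a positive integer. If G is a finite simple graph of order n with minimum degree at least k and with no induced subgraph isomorphic to the star K_{1,k+1}, then Ψ⁺_g(G) ≥ n/2 and Ψ⁻_g(G) ≥ n/2; equivalently, 2·Ψ⁺_g(G) ≥ n and 2·Ψ⁻_g(G) ≥ n. -/

import Mathlib

namespace EnclavelessGame

variable {V : Type*} [Fintype V] [DecidableEq V]

/-- `v` is an enclave of `S` if `v ∈ S` and its closed neighborhood `N[v]` is contained in `S`. -/
def IsEnclave (G : SimpleGraph V) (S : Finset V) (v : V) : Prop :=
  v ∈ S ∧ ∀ u, G.Adj v u → u ∈ S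

/-- `S` is enclaveless if it contains no enclave. -/
def IsEnclaveless (G : SimpleGraph V) (S : Finset V) : Prop :=
  ∀ v, ¬ IsEnclave G S v

instance (G : SimpleGraph V) [DecidableRel G.Adj] (S : Finset V) :
    Decidable (IsEnclaveless G S) := by
  unfold IsEnclaveless IsEnclave
  infer_instance

/-- `D` is a dominating set: every vertex lies in the closed neighborhood
of some vertex of `D`. -/
def IsDominating (G : SimpleGraph V) (D : Finset V) : Prop :=
  ∀ v, ∃ u ∈ D, u = v ∨ G.Adj u v

/-- `D` is a minimal dominating set (minimal with respect to set inclusion). -/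
def IsMinimalDominating (G : SimpleGraph V) (D : Finset V) : Prop :=
  IsDominating G D ∧ ∀ D' ⊆ D, IsDominating G D' → D' = D

/-- `S` is a maximal enclaveless set (maximal with respect to set inclusion). -/
def IsMaximalEnclaveless (G : SimpleGraph V) (S : Finset V) : Prop :=
  IsEnclaveless G S ∧ ∀ T, S ⊆ T → IsEnclaveless G T → T = S

/-- The domination number `γ(G)`: minimum cardinality of a dominating set. -/
noncomputable def domNum (G : SimpleGraph V) : ℕ :=
  sInf {k | ∃ D : Finset V, IsDominating G D ∧ D.card = k}

/-- The upper domination number `Γ(G)`: maximum cardinality of a minimal dominating set. -/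
noncomputable def upperDomNum (G : SimpleGraph V) : ℕ :=
  sSup {k | ∃ D : Finset V, IsMinimalDominating G D ∧ D.card = k}

/-- The enclaveless number `Ψ(G)`: maximum cardinality of an enclaveless set. -/
noncomputable def enclavelessNum (G : SimpleGraph V) : ℕ :=
  sSup {k | ∃ S : Finset V, IsEnclaveless G S ∧ S.card = k}

/-- The lower enclaveless number `ψ(G)`: minimum cardinality of a maximal enclaveless set. -/
noncomputable def lowerEnclavelessNum (G : SimpleGraph V) : ℕ :=
  sInf {k | ∃ S : Finset V, IsMaximalEnclaveless G S ∧ S.card = k}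

/-- The set of playable vertices given the set `S` of already chosen vertices:
vertices `v ∉ S` such that `S ∪ {v}` is enclaveless. -/
def playableSet (G : SimpleGraph V) [DecidableRel G.Adj] (S : Finset V) : Finset V :=
  Finset.univ.filter (fun v => v ∉ S ∧ IsEnclaveless G (insert v S))

/-- The value of the competition-enclaveless game from position `S`: `maxTurn = true`
means it is Maximizer's turn (this computes `MaxVal S`), and `maxTurn = false` means it
is Minimizer's turn (this computes `MinVal S`). If no vertex is playable the value is
`|S|`; otherwise it is the max (resp. min) over playable `v` of the value of
`S ∪ {v}` with the turn switched. -/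
def gameVal (G : SimpleGraph V) [DecidableRel G.Adj] (maxTurn : Bool) (S : Finset V) : ℕ :=
  if h : (playableSet G S).Nonempty then
    if maxTurn then
      (playableSet G S).attach.sup' (by simpa using h)
        (fun v => gameVal G false (insert v.1 S))
    else
      (playableSet G S).attach.inf' (by simpa using h)
        (fun v => gameVal G true (insert v.1 S))
  else S.card
termination_by Sᶜ.card
decreasing_by
  all_goals
    have hv := v.2
    simp only [playableSet, Finset.mem_filter] at hv
    rw [Finset.compl_insert]
    exact Finset.card_erase_lt_of_mem (Finset.mem_compl.mpr hv.2.1)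

/-- The Maximizer-start enclaveless game number `Ψ⁺_g(G) = MaxVal ∅`. -/
def maxStartGameNum (G : SimpleGraph V) [DecidableRel G.Adj] : ℕ := gameVal G true ∅

/-- The Minimizer-start enclaveless game number `Ψ⁻_g(G) = MinVal ∅`. -/
def minStartGameNum (G : SimpleGraph V) [DecidableRel G.Adj] : ℕ := gameVal G false ∅

section Key

variable {V : Type*} [Fintype V] [DecidableEq V]

/-- Key combinatorial lemma: if `S` is enclaveless and no vertex is playable,
then `2|S| ≥ n`. -/
lemma key_card (G : SimpleGraph V) [DecidableRel G.Adj] (k : ℕ) (hk : 1 ≤ k)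
    (hdeg : ∀ v : V, k ≤ G.degree v)
    (hstar : ¬ ∃ (v : V) (T : Finset V), T.card = k + 1 ∧ (∀ u ∈ T, G.Adj v u) ∧
        ∀ a ∈ T, ∀ b ∈ T, a ≠ b → ¬ G.Adj a b)
    (S : Finset V) (hS : IsEnclaveless G S) (hmax : ¬ (playableSet G S).Nonempty) :
    Fintype.card V ≤ 2 * S.card := by
  classical
  set D : Finset V := Sᶜ with hD
  have hDmem : ∀ v, v ∈ D ↔ v ∉ S := by intro v; simp [hD]
  -- every vertex of D either has all neighbors in S, or has a private neighbor in S
  have hDprop : ∀ v ∈ D, (∀ u, G.Adj v u → u ∈ S) ∨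
      (∃ w, w ∈ S ∧ G.Adj v w ∧ ∀ u, G.Adj w u → u = v ∨ u ∈ S) := by
    intro v hv
    have hvS : v ∉ S := (hDmem v).mp hv
    have hnot : ¬ IsEnclaveless G (insert v S) := by
      intro h
      exact hmax ⟨v, by simp [playableSet, hvS, h]⟩
    rw [IsEnclaveless] at hnot
    push_neg at hnot
    obtain ⟨w, hwmem, hwnb⟩ := hnot
    rcases Finset.mem_insert.mp hwmem with rfl | hwS
    · left
      intro u hu
      rcases Finset.mem_insert.mp (hwnb u hu) with rfl | h
      · exact absurd hu G.irrefl
      · exact h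
    · right
      have hne := hS w
      rw [IsEnclave] at hne
      push_neg at hne
      obtain ⟨u, hu, huS⟩ := hne hwS
      have huv : u = v := by
        rcases Finset.mem_insert.mp (hwnb u hu) with h | h
        · exact h
        · exact absurd h huS
      subst huv
      refine ⟨w, hwS, G.adj_symm hu, fun x hx => ?_⟩
      rcases Finset.mem_insert.mp (hwnb x hx) with h | h
      · exact Or.inl h
      · exact Or.inr h
  set A : Finset V := D.filter (fun v => ∀ u, G.Adj v u → u ∈ S) with hA
  have hAD : A ⊆ D := Finset.filter_subset _ _
  have hAprop : ∀ v ∈ A, ∀ u, G.Adj v u → u ∈ S := fun v hv => (Finset.mem_filter.mp hv).2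
  -- private neighbors for vertices in D \ A
  have hBspec : ∀ v, v ∈ D → v ∉ A →
      ∃ w, w ∈ S ∧ G.Adj v w ∧ ∀ u, G.Adj w u → u = v ∨ u ∈ S := by
    intro v hv hvA
    rcases hDprop v hv with h | h
    · exact absurd (Finset.mem_filter.mpr ⟨hv, h⟩) hvA
    · exact h
  choose! p hpS hpAdj hpPriv using hBspec
  -- no vertex is adjacent to more than k vertices of A
  have hstar' : ∀ (u : V) (T : Finset V), T ⊆ A → (∀ x ∈ T, G.Adj u x) → T.card ≤ k := by
    intro u T hTA hTadj
    by_contra hc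
    push_neg at hc
    obtain ⟨T', hT'sub, hT'card⟩ := Finset.exists_subset_card_eq (Nat.succ_le_of_lt hc)
    refine hstar ⟨u, T', hT'card, fun x hx => hTadj x (hT'sub hx), ?_⟩
    intro a ha b hb hab hadj
    have haA : a ∈ A := hTA (hT'sub ha)
    have hbA : b ∈ A := hTA (hT'sub hb)
    have : b ∈ S := hAprop a haA b hadj
    exact (hDmem b).mp (hAD hbA) this
  -- Hall's condition for the bipartite graph between A and its neighborhoods
  have hall : ∀ s : Finset {x // x ∈ A},
      s.card ≤ (s.biUnion (fun x => G.neighborFinset x.1)).card := by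
    intro s
    set U := s.biUnion (fun x => G.neighborFinset x.1) with hU
    have h1 : s.card * k ≤ ∑ x ∈ s, (G.neighborFinset x.1).card := by
      calc s.card * k = ∑ _x ∈ s, k := by rw [Finset.sum_const, smul_eq_mul]
        _ ≤ ∑ x ∈ s, (G.neighborFinset x.1).card := by
            refine Finset.sum_le_sum fun x _ => ?_
            rw [SimpleGraph.card_neighborFinset_eq_degree]
            exact hdeg x.1
    have h2 : ∑ x ∈ s, (G.neighborFinset x.1).card
        = ∑ u ∈ U, (s.filter (fun x => G.Adj x.1 u)).card := by
      have heq : ∀ x ∈ s, (G.neighborFinset x.1).card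
          = (U.filter (fun u => G.Adj x.1 u)).card := by
        intro x hx
        congr 1
        ext u
        simp only [Finset.mem_filter, SimpleGraph.mem_neighborFinset, hU, Finset.mem_biUnion]
        exact ⟨fun h => ⟨⟨x, hx, by simpa using h⟩, h⟩, fun h => h.2⟩
      rw [Finset.sum_congr rfl heq]
      simp_rw [Finset.card_filter]
      exact Finset.sum_comm
    have h3 : ∑ u ∈ U, (s.filter (fun x => G.Adj x.1 u)).card ≤ U.card * k := by
      calc ∑ u ∈ U, (s.filter (fun x => G.Adj x.1 u)).card
          ≤ ∑ _u ∈ U, k := by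
            refine Finset.sum_le_sum fun u _ => ?_
            have himg : ((s.filter (fun x => G.Adj x.1 u)).image Subtype.val).card
                = (s.filter (fun x => G.Adj x.1 u)).card :=
              Finset.card_image_of_injective _ Subtype.val_injective
            rw [← himg]
            refine hstar' u _ ?_ ?_
            · intro y hy
              obtain ⟨x, _, rfl⟩ := Finset.mem_image.mp hy
              exact x.2
            · intro y hy
              obtain ⟨x, hx, rfl⟩ := Finset.mem_image.mp hy
              exact G.adj_symm (Finset.mem_filter.mp hx).2
        _ = U.card * k := by rw [Finset.sum_const, smul_eq_mul]
    have := le_trans h1 (le_trans h2.le h3)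
    exact Nat.le_of_mul_le_mul_right this hk
  obtain ⟨g, hginj, hgmem⟩ :=
    (Finset.all_card_le_biUnion_card_iff_existsInjective'
      (fun x : {x // x ∈ A} => G.neighborFinset x.1)).mp hall
  -- assemble the injection D → S
  set f : V → V := fun v => if h : v ∈ A then g ⟨v, h⟩ else p v with hf
  have hfA : ∀ (v : V) (h : v ∈ A), f v = g ⟨v, h⟩ := by
    intro v h; simp [hf, h]
  have hfB : ∀ v ∈ D, v ∉ A → f v = p v := by
    intro v _ h; simp [hf, h]
  have hgadj : ∀ (v : V) (h : v ∈ A), G.Adj v (g ⟨v, h⟩) := by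
    intro v h
    have := hgmem ⟨v, h⟩
    rwa [SimpleGraph.mem_neighborFinset] at this
  have hmaps : ∀ v ∈ D, f v ∈ S := by
    intro v hv
    by_cases h : v ∈ A
    · rw [hfA v h]
      exact hAprop v h _ (hgadj v h)
    · rw [hfB v hv h]
      exact hpS v hv h
  have hinj : Set.InjOn f D := by
    intro a ha' b hb' hab
    have ha : a ∈ D := ha'
    have hb : b ∈ D := hb'
    by_cases hA1 : a ∈ A <;> by_cases hA2 : b ∈ A
    · rw [hfA a hA1, hfA b hA2] at hab
      exact congrArg Subtype.val (hginj hab)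
    · -- a ∈ A, b ∉ A : f a = g⟨a⟩ adjacent to a; p b private for b
      rw [hfA a hA1, hfB b hb hA2] at hab
      have hadj : G.Adj (p b) a := G.adj_symm (hab ▸ hgadj a hA1)
      rcases hpPriv b hb hA2 a hadj with h | h
      · exact h
      · exact absurd h ((hDmem a).mp ha)
    · rw [hfB a ha hA1, hfA b hA2] at hab
      have hadj : G.Adj (p a) b := by
        rw [hab]; exact (hgadj b hA2).symm
      rcases hpPriv a ha hA1 b hadj with h | h
      · exact h.symm
      · exact absurd h ((hDmem b).mp hb)
    · rw [hfB a ha hA1, hfB b hb hA2] at hab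
      have hadj : G.Adj (p a) b := by
        rw [hab]; exact G.adj_symm (hpAdj b hb hA2)
      rcases hpPriv a ha hA1 b hadj with h | h
      · exact h.symm
      · exact absurd h ((hDmem b).mp hb)
  have hcard : D.card ≤ S.card := Finset.card_le_card_of_injOn f hmaps hinj
  have h2 : S.card + Sᶜ.card = Fintype.card V := Finset.card_add_card_compl S
  have h3 : D.card = Sᶜ.card := rfl
  omega

/-- From any enclaveless position, the game value is at least `n/2`. -/
lemma gameVal_ge (G : SimpleGraph V) [DecidableRel G.Adj] (k : ℕ) (hk : 1 ≤ k)
    (hdeg : ∀ v : V, k ≤ G.degree v)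
    (hstar : ¬ ∃ (v : V) (T : Finset V), T.card = k + 1 ∧ (∀ u ∈ T, G.Adj v u) ∧
        ∀ a ∈ T, ∀ b ∈ T, a ≠ b → ¬ G.Adj a b)
    (S : Finset V) (hS : IsEnclaveless G S) (b : Bool) :
    Fintype.card V ≤ 2 * gameVal G b S := by
  rw [gameVal]
  by_cases h : (playableSet G S).Nonempty
  · rw [dif_pos h]
    have hplay : ∀ v ∈ playableSet G S, IsEnclaveless G (insert v S) := by
      intro v hv
      exact ((Finset.mem_filter.mp hv).2).2
    cases b with
    | true =>
      simp only [if_true]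
      have hne : ((playableSet G S).attach).Nonempty := by simpa using h
      obtain ⟨x, hx, hval⟩ := Finset.exists_mem_eq_sup' hne
        (fun v : {x // x ∈ playableSet G S} => gameVal G false (insert v.1 S))
      rw [hval]
      exact gameVal_ge G k hk hdeg hstar (insert x.1 S) (hplay x.1 x.2) false
    | false =>
      simp only [Bool.false_eq_true, if_false]
      have hne : ((playableSet G S).attach).Nonempty := by simpa using h
      obtain ⟨x, hx, hval⟩ := Finset.exists_mem_eq_inf' hne
        (fun v : {x // x ∈ playableSet G S} => gameVal G true (insert v.1 S))
      rw [hval]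
      exact gameVal_ge G k hk hdeg hstar (insert x.1 S) (hplay x.1 x.2) true
  · rw [dif_neg h]
    exact key_card G k hk hdeg hstar S hS h
termination_by Sᶜ.card
decreasing_by
  all_goals
    have hvmem := x.2
    simp only [playableSet, Finset.mem_filter] at hvmem
    rw [Finset.compl_insert]
    exact Finset.card_erase_lt_of_mem (Finset.mem_compl.mpr hvmem.2.1)

end Key

/-- Let `k` be a positive integer. If `G` is a finite simple graph of order `n` with
minimum degree at least `k` and no induced `K_{1,k+1}` (no vertex has `k+1` pairwise
non-adjacent neighbors), then `Ψ⁺_g(G) ≥ n/2` and `Ψ⁻_g(G) ≥ n/2`, i.e.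
`2·Ψ⁺_g(G) ≥ n` and `2·Ψ⁻_g(G) ≥ n`. -/
theorem starFree_gameNums_ge {V : Type*} [Fintype V] [DecidableEq V]
    (G : SimpleGraph V) [DecidableRel G.Adj] (k : ℕ) (hk : 1 ≤ k)
    (hdeg : ∀ v : V, k ≤ G.degree v)
    (hstar : ¬ ∃ (v : V) (T : Finset V), T.card = k + 1 ∧ (∀ u ∈ T, G.Adj v u) ∧
        ∀ a ∈ T, ∀ b ∈ T, a ≠ b → ¬ G.Adj a b) :
    Fintype.card V ≤ 2 * maxStartGameNum G ∧ Fintype.card V ≤ 2 * minStartGameNum G := by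
  have hempty : IsEnclaveless G (∅ : Finset V) := by
    intro v hv
    exact absurd hv.1 (Finset.notMem_empty v)
  exact ⟨gameVal_ge G k hk hdeg hstar ∅ hempty true,
    gameVal_ge G k hk hdeg hstar ∅ hempty false⟩

end EnclavelessGame
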